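/- arXiv:1304.3999 — 5 statements merged into one kernel-verified Lean document; each statement's English description precedes it below -/
import Mathlib

section
/- Let P be an N×N stochastic matrix, R ∈ ℝᴺ, γ ∈ [0,1), and λ ∈ [0,1). Define T : ℝᴺ → ℝᴺ by TV = R + γPV, and define T^λ V = (1-λ) ∑_{k=0}^∞ λᵏ T^{k+1} V. Then T^λ V = (I - λγP)⁻¹(R + (1-λ)γPV). -/
open Matrix

attribute [local instance] Matrix.linftyOpNormedRing Matrix.linftyOpNormedAlgebra

/-- The λ-averaged Bellman operator has the closed form
    `T^λ V = (I - λγP)⁻¹ (R + (1-λ)γPV)`. -/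
theorem tlambda_closed_form {N : ℕ} (P : Matrix (Fin N) (Fin N) ℝ)
    (R : Fin N → ℝ) (γ lam : ℝ)
    (hP0 : ∀ i j, 0 ≤ P i j) (hP1 : ∀ i, ∑ j, P i j = 1)
    (hγ : 0 ≤ γ) (hγ1 : γ < 1) (hlam : 0 ≤ lam) (hlam1 : lam < 1)
    (T : (Fin N → ℝ) → (Fin N → ℝ))
    (hT : ∀ V, T V = R + γ • P.mulVec V) (V : Fin N → ℝ) :
    (1 - lam) • (∑' k : ℕ, lam ^ k • T^[k + 1] V) =
      ((1 - (lam * γ) • P)⁻¹).mulVec (R + ((1 - lam) * γ) • P.mulVec V) := by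
  classical
  set A : Matrix (Fin N) (Fin N) ℝ := 1 - (lam * γ) • P with hAdef
  set f : ℕ → (Fin N → ℝ) := fun k => lam ^ k • T^[k + 1] V with hfdef
  set S : Fin N → ℝ := ∑' k : ℕ, f k with hSdef
  set b : Fin N → ℝ := R + ((1 - lam) * γ) • P.mulVec V with hbdef
  -- the matrix `A` is a unit
  have hPnorm : ‖P‖ ≤ 1 := by
    rw [Matrix.linfty_opNorm_def]
    have : (Finset.univ.sup fun i : Fin N => ∑ j, ‖P i j‖₊ : NNReal) ≤ 1 := by
      apply Finset.sup_le
      intro i _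
      rw [← NNReal.coe_le_coe]
      push_cast
      calc (∑ j, (‖P i j‖₊ : ℝ)) = ∑ j, P i j := by
            refine Finset.sum_congr rfl fun j _ => ?_
            simp [coe_nnnorm, abs_of_nonneg (hP0 i j)]
        _ = 1 := hP1 i
        _ ≤ 1 := le_refl 1
    exact_mod_cast this
  have hAunit : IsUnit A := by
    have hnorm : ‖(lam * γ) • P‖ < 1 := by
      rw [norm_smul, Real.norm_eq_abs, abs_of_nonneg (mul_nonneg hlam hγ)]
      have h2 : lam * γ * ‖P‖ ≤ lam * γ :=
        mul_le_of_le_one_right (mul_nonneg hlam hγ) hPnorm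
      nlinarith
    exact isUnit_one_sub_of_norm_lt_one hnorm
  have hdet : IsUnit A.det := (Matrix.isUnit_iff_isUnit_det A).mp hAunit
  -- norm bound on `P.mulVec`
  have hPv : ∀ W : Fin N → ℝ, ‖P.mulVec W‖ ≤ ‖W‖ := by
    intro W
    rw [pi_norm_le_iff_of_nonneg (norm_nonneg W)]
    intro i
    rw [Real.norm_eq_abs, Matrix.mulVec, dotProduct]
    calc |∑ j, P i j * W j| ≤ ∑ j, |P i j * W j| := Finset.abs_sum_le_sum_abs _ _
      _ ≤ ∑ j, P i j * ‖W‖ := by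
          refine Finset.sum_le_sum fun j _ => ?_
          rw [abs_mul, abs_of_nonneg (hP0 i j)]
          exact mul_le_mul_of_nonneg_left (norm_le_pi_norm W j) (hP0 i j)
      _ = ‖W‖ := by rw [← Finset.sum_mul, hP1 i, one_mul]
  -- uniform bound on iterates of T
  set C : ℝ := ‖R‖ / (1 - γ) + ‖V‖ with hCdef
  have h1γ : (0:ℝ) < 1 - γ := by linarith
  have hCnonneg : 0 ≤ C := by positivity
  have hiter : ∀ n, ‖T^[n] V‖ ≤ C := by
    intro n
    induction n with
    | zero =>
      simp only [Function.iterate_zero, id_eq, hCdef]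
      have : (0:ℝ) ≤ ‖R‖ / (1 - γ) := by positivity
      linarith
    | succ n ih =>
      rw [Function.iterate_succ_apply', hT]
      calc ‖R + γ • P.mulVec (T^[n] V)‖ ≤ ‖R‖ + ‖γ • P.mulVec (T^[n] V)‖ := norm_add_le _ _
        _ ≤ ‖R‖ + γ * C := by
            rw [norm_smul, Real.norm_eq_abs, abs_of_nonneg hγ]
            have := hPv (T^[n] V)
            nlinarith
        _ ≤ C := by
            have : ‖R‖ / (1 - γ) * (1 - γ) = ‖R‖ := div_mul_cancel₀ _ (ne_of_gt h1γ)
            rw [hCdef]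
            nlinarith [mul_nonneg (le_of_lt h1γ) (norm_nonneg V)]
  -- summability facts
  have hf : Summable f := by
    apply Summable.of_norm_bounded (g := fun k => C * lam ^ k)
      ((summable_geometric_of_lt_one hlam hlam1).mul_left C)
    intro k
    rw [hfdef, norm_smul, Real.norm_eq_abs, abs_of_nonneg (pow_nonneg hlam k), mul_comm]
    exact mul_le_mul_of_nonneg_right (hiter (k + 1)) (pow_nonneg hlam k)
  have hfs : Summable (fun k => f (k + 1)) := (summable_nat_add_iff 1).mpr hf
  have hgeo : Summable (fun k : ℕ => lam ^ (k + 1)) :=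
    (summable_nat_add_iff 1).mpr (summable_geometric_of_lt_one hlam hlam1)
  have hgR : Summable (fun k : ℕ => lam ^ (k + 1) • R) := hgeo.smul_const R
  -- the recurrence
  have hrec : ∀ k, (lam * γ) • P.mulVec (f k) = f (k + 1) - lam ^ (k + 1) • R := by
    intro k
    have h2 : T^[k + 1 + 1] V = R + γ • P.mulVec (T^[k + 1] V) := by
      rw [Function.iterate_succ_apply', hT]
    rw [hfdef]
    simp only [h2, Matrix.mulVec_smul]
    ext i
    simp only [Pi.smul_apply, Pi.sub_apply, Pi.add_apply, smul_eq_mul, pow_succ]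
    ring
  -- apply A to the candidate solution via continuity/linearity
  have hmap : A.mulVec S = ∑' k, A.mulVec (f k) := by
    have L : (Fin N → ℝ) →L[ℝ] (Fin N → ℝ) := LinearMap.toContinuousLinearMap A.mulVecLin
    exact (LinearMap.toContinuousLinearMap A.mulVecLin).map_tsum hf
  have hAf : ∀ k, A.mulVec (f k) = f k - f (k + 1) + lam ^ (k + 1) • R := by
    intro k
    rw [hAdef, Matrix.sub_mulVec, Matrix.one_mulVec, Matrix.smul_mulVec, hrec k]
    abel
  have hsum1 : ∑' k, f (k + 1) = S - f 0 := by
    have := Summable.tsum_eq_zero_add hf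
    rw [hSdef]
    rw [this]
    abel
  have hsum2 : (∑' k : ℕ, lam ^ (k + 1) • R) = (lam * (1 - lam)⁻¹) • R := by
    rw [Summable.tsum_smul_const hgeo]
    congr 1
    have : (fun k : ℕ => lam ^ (k + 1)) = fun k : ℕ => lam * lam ^ k := by
      funext k; rw [pow_succ]; ring
    rw [this, tsum_mul_left, tsum_geometric_of_lt_one hlam hlam1]
  have hkey : A.mulVec ((1 - lam) • S) = b := by
    rw [Matrix.mulVec_smul, hmap]
    simp only [hAf]
    rw [Summable.tsum_add (hf.sub hfs) hgR, Summable.tsum_sub hf hfs, hsum1, hsum2]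
    have hf0 : f 0 = R + γ • P.mulVec V := by
      rw [hfdef]; simp [hT]
    have hlamne : (1 : ℝ) - lam ≠ 0 := by linarith
    rw [hf0, hbdef]
    ext i
    simp only [Pi.smul_apply, Pi.add_apply, Pi.sub_apply, smul_eq_mul]
    field_simp
    ring
  calc (1 - lam) • S = ((1 - (lam * γ) • P)⁻¹ * A).mulVec ((1 - lam) • S) := by
        rw [← hAdef, Matrix.nonsing_inv_mul A hdet, Matrix.one_mulVec]
    _ = ((1 - (lam * γ) • P)⁻¹).mulVec (A.mulVec ((1 - lam) • S)) :=
        (Matrix.mulVec_mulVec _ _ _).symm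
    _ = ((1 - (lam * γ) • P)⁻¹).mulVec b := by rw [hkey]
end

section
/- With T, T^λ as above (P stochastic, γ, λ ∈ [0,1)), we have T^λ V = V + (I - λγP)⁻¹(R + γPV - V) for all V ∈ ℝᴺ. -/
open Matrix Finset

attribute [local instance] Matrix.linftyOpNormedRing Matrix.linftyOpNormedAlgebra
  Matrix.linftyOpNormedSpace

private lemma cauchy_aux {lam : ℝ} (hlam : 0 ≤ lam) (hlam1 : lam < 1)
    (a : ℕ → ℝ) (C : ℝ) (hC : ∀ i, |a i| ≤ C) :
    (1 - lam) * ∑' k : ℕ, lam ^ k * (∑ i ∈ range (k + 1), a i) = ∑' i : ℕ, lam ^ i * a i := by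
  have hlamne : (1 : ℝ) - lam ≠ 0 := by linarith
  have hg : Summable fun k : ℕ => ‖lam ^ k‖ := by
    simpa [Real.norm_eq_abs, abs_of_nonneg (pow_nonneg hlam _)] using
      summable_geometric_of_lt_one hlam hlam1
  have hf : Summable fun i : ℕ => ‖lam ^ i * a i‖ := by
    refine Summable.of_nonneg_of_le (fun i => norm_nonneg _) (fun i => ?_)
      ((summable_geometric_of_lt_one hlam hlam1).mul_right C)
    rw [Real.norm_eq_abs, abs_mul, abs_of_nonneg (pow_nonneg hlam _)]
    exact mul_le_mul_of_nonneg_left (hC i) (pow_nonneg hlam _)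
  have key := tsum_mul_tsum_eq_tsum_sum_range_of_summable_norm hf hg
  have h2 : ∀ n : ℕ, (∑ k ∈ range (n + 1), (lam ^ k * a k) * lam ^ (n - k))
      = lam ^ n * ∑ i ∈ range (n + 1), a i := by
    intro n
    rw [Finset.mul_sum]
    refine Finset.sum_congr rfl fun k hk => ?_
    have hk' : k ≤ n := Nat.lt_succ_iff.mp (Finset.mem_range.mp hk)
    calc (lam ^ k * a k) * lam ^ (n - k) = (lam ^ k * lam ^ (n - k)) * a k := by ring
      _ = lam ^ n * a k := by rw [← pow_add, Nat.add_sub_cancel' hk']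
  rw [tsum_geometric_of_lt_one hlam hlam1] at key
  simp only [h2] at key
  rw [← key]
  field_simp

private lemma real_key {lam γ : ℝ} (hlam : 0 ≤ lam) (hlam1 : lam < 1)
    (hγ : 0 ≤ γ) (hγ1 : γ < 1) (v : ℝ) (a : ℕ → ℝ) (C : ℝ)
    (hC : ∀ i, |a i| ≤ C * γ ^ i) :
    (1 - lam) * ∑' k : ℕ, lam ^ k * (v + ∑ i ∈ range (k + 1), a i)
      = v + ∑' i : ℕ, lam ^ i * a i := by
  have hlamne : (1 : ℝ) - lam ≠ 0 := by linarith
  have hC0 : 0 ≤ C := by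
    have := (abs_nonneg (a 0)).trans (hC 0)
    simpa using this
  have hCu : ∀ i, |a i| ≤ C := fun i =>
    (hC i).trans (by
      calc C * γ ^ i ≤ C * 1 := by
            exact mul_le_mul_of_nonneg_left (pow_le_one₀ hγ hγ1.le) hC0
        _ = C := mul_one C)
  have hsbound : ∀ k : ℕ, |∑ i ∈ range (k + 1), a i| ≤ C * (1 - γ)⁻¹ := by
    intro k
    calc |∑ i ∈ range (k + 1), a i| ≤ ∑ i ∈ range (k + 1), |a i| :=
          Finset.abs_sum_le_sum_abs _ _
      _ ≤ ∑ i ∈ range (k + 1), C * γ ^ i := Finset.sum_le_sum fun i _ => hC i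
      _ = C * ∑ i ∈ range (k + 1), γ ^ i := by rw [Finset.mul_sum]
      _ ≤ C * (1 - γ)⁻¹ := by
          refine mul_le_mul_of_nonneg_left ?_ hC0
          have := Summable.sum_le_tsum (range (k + 1)) (fun i _ => pow_nonneg hγ i)
            (summable_geometric_of_lt_one hγ hγ1)
          rwa [tsum_geometric_of_lt_one hγ hγ1] at this
  have h1 : Summable fun k : ℕ => lam ^ k * v :=
    (summable_geometric_of_lt_one hlam hlam1).mul_right v
  have h2 : Summable fun k : ℕ => lam ^ k * ∑ i ∈ range (k + 1), a i := by
    refine Summable.of_norm ?_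
    refine Summable.of_nonneg_of_le (fun k => norm_nonneg _) (fun k => ?_)
      ((summable_geometric_of_lt_one hlam hlam1).mul_right (C * (1 - γ)⁻¹))
    rw [Real.norm_eq_abs, abs_mul, abs_of_nonneg (pow_nonneg hlam _)]
    exact mul_le_mul_of_nonneg_left (hsbound k) (pow_nonneg hlam _)
  have hsplit : (∑' k : ℕ, lam ^ k * (v + ∑ i ∈ range (k + 1), a i))
      = (∑' k : ℕ, lam ^ k * v) + ∑' k : ℕ, lam ^ k * ∑ i ∈ range (k + 1), a i := by
    rw [← Summable.tsum_add h1 h2]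
    exact tsum_congr fun k => by ring
  rw [hsplit, mul_add, cauchy_aux hlam hlam1 a C hCu,
    tsum_mul_right, tsum_geometric_of_lt_one hlam hlam1]
  field_simp

/-- `T^λ V = V + (I - λγP)⁻¹ (R + γPV - V)`. -/
theorem tlambda_residual_form {N : ℕ} (P : Matrix (Fin N) (Fin N) ℝ)
    (R : Fin N → ℝ) (γ lam : ℝ)
    (hP0 : ∀ i j, 0 ≤ P i j) (hP1 : ∀ i, ∑ j, P i j = 1)
    (hγ : 0 ≤ γ) (hγ1 : γ < 1) (hlam : 0 ≤ lam) (hlam1 : lam < 1)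
    (T : (Fin N → ℝ) → (Fin N → ℝ))
    (hT : ∀ V, T V = R + γ • P.mulVec V) (V : Fin N → ℝ) :
    (1 - lam) • (∑' k : ℕ, lam ^ k • T^[k + 1] V) =
      V + ((1 - (lam * γ) • P)⁻¹).mulVec (R + γ • P.mulVec V - V) := by
  classical
  rcases Nat.eq_zero_or_pos N with hN | hN
  · subst hN
    exact Subsingleton.elim _ _
  haveI : Nonempty (Fin N) := ⟨⟨0, hN⟩⟩
  haveI : CompleteSpace (Matrix (Fin N) (Fin N) ℝ) := FiniteDimensional.complete ℝ _
  set w : Fin N → ℝ := R + γ • P.mulVec V - V with hw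
  set B : Matrix (Fin N) (Fin N) ℝ := γ • P with hB
  set A : Matrix (Fin N) (Fin N) ℝ := (lam * γ) • P with hA
  have hAB : A = lam • B := by rw [hA, hB, smul_smul]
  have hgs : ∀ x : Fin N → ℝ, γ • P.mulVec x = B.mulVec x := fun x =>
    (Matrix.smul_mulVec γ P x).symm
  -- norm of P
  have hPn : ‖P‖ ≤ 1 := by
    rw [linfty_opNorm_def]
    have hsup : (Finset.univ.sup fun i : Fin N => ∑ j, ‖P i j‖₊) ≤ 1 := by
      refine Finset.sup_le fun i _ => ?_
      have h1 : ((∑ j, ‖P i j‖₊ : NNReal) : ℝ) = 1 := by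
        push_cast
        calc (∑ j, (‖P i j‖₊ : ℝ)) = ∑ j, P i j := by
              refine Finset.sum_congr rfl fun j _ => ?_
              rw [coe_nnnorm, Real.norm_of_nonneg (hP0 i j)]
          _ = 1 := hP1 i
      exact le_of_eq (by exact_mod_cast h1)
    exact_mod_cast hsup
  have hBn : ‖B‖ ≤ γ := by
    rw [hB, norm_smul, Real.norm_eq_abs, abs_of_nonneg hγ]
    calc γ * ‖P‖ ≤ γ * 1 := mul_le_mul_of_nonneg_left hPn hγ
      _ = γ := mul_one γ
  have hAnorm : ‖A‖ < 1 := by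
    rw [hA, norm_smul, Real.norm_eq_abs, abs_of_nonneg (mul_nonneg hlam hγ)]
    calc lam * γ * ‖P‖ ≤ lam * γ * 1 :=
          mul_le_mul_of_nonneg_left hPn (mul_nonneg hlam hγ)
      _ = lam * γ := mul_one _
      _ < 1 := by nlinarith
  -- inverse as geometric series
  have h_inv : (1 - A)⁻¹ = ∑' n : ℕ, A ^ n := by
    rw [Matrix.nonsing_inv_eq_ringInverse, ← geom_series_eq_inverse A hAnorm]
    rfl
  have hsA : Summable fun n : ℕ => A ^ n := summable_geometric_of_norm_lt_one hAnorm
  have hmulvec : (∑' n : ℕ, A ^ n).mulVec w = ∑' n : ℕ, (A ^ n).mulVec w := by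
    let L : Matrix (Fin N) (Fin N) ℝ →ₗ[ℝ] (Fin N → ℝ) :=
      { toFun := fun M => M.mulVec w
        map_add' := fun M₁ M₂ => Matrix.add_mulVec _ _ _
        map_smul' := fun c M => Matrix.smul_mulVec c M w }
    exact (LinearMap.toContinuousLinearMap L).map_tsum hsA
  -- iterate formula
  have hTk : ∀ k : ℕ, T^[k + 1] V = V + ∑ i ∈ range (k + 1), (B ^ i).mulVec w := by
    intro k
    induction k with
    | zero =>
      rw [Function.iterate_one, hT, Finset.sum_range_one, pow_zero, Matrix.one_mulVec, hw]
      abel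
    | succ k ih =>
      rw [Function.iterate_succ_apply', ih, hT]
      have h2 : B.mulVec (∑ i ∈ range (k + 1), (B ^ i).mulVec w)
          = ∑ i ∈ range (k + 1), (B ^ (i + 1)).mulVec w := by
        rw [← Matrix.mulVecLin_apply, map_sum]
        refine Finset.sum_congr rfl fun i _ => ?_
        rw [Matrix.mulVecLin_apply, Matrix.mulVec_mulVec, ← pow_succ']
      rw [Finset.sum_range_succ' (fun i => (B ^ i).mulVec w) (k + 1),
        hgs, Matrix.mulVec_add, h2, pow_zero, Matrix.one_mulVec, hw, ← hgs]
      abel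
  -- norm bounds on terms
  have hx : ∀ i : ℕ, ‖(B ^ i).mulVec w‖ ≤ ‖w‖ * γ ^ i := by
    intro i
    calc ‖(B ^ i).mulVec w‖ ≤ ‖B ^ i‖ * ‖w‖ := linfty_opNorm_mulVec _ _
      _ ≤ ‖B‖ ^ i * ‖w‖ :=
          mul_le_mul_of_nonneg_right (norm_pow_le _ _) (norm_nonneg _)
      _ ≤ γ ^ i * ‖w‖ :=
          mul_le_mul_of_nonneg_right (pow_le_pow_left₀ (norm_nonneg _) hBn i) (norm_nonneg _)
      _ = ‖w‖ * γ ^ i := mul_comm _ _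
  have hsgeomγ : Summable fun i : ℕ => γ ^ i := summable_geometric_of_lt_one hγ hγ1
  have hSk : ∀ k : ℕ, ‖∑ i ∈ range (k + 1), (B ^ i).mulVec w‖ ≤ ‖w‖ * (1 - γ)⁻¹ := by
    intro k
    calc ‖∑ i ∈ range (k + 1), (B ^ i).mulVec w‖
        ≤ ∑ i ∈ range (k + 1), ‖(B ^ i).mulVec w‖ := norm_sum_le _ _
      _ ≤ ∑ i ∈ range (k + 1), ‖w‖ * γ ^ i := Finset.sum_le_sum fun i _ => hx i
      _ = ‖w‖ * ∑ i ∈ range (k + 1), γ ^ i := by rw [Finset.mul_sum]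
      _ ≤ ‖w‖ * (1 - γ)⁻¹ := by
          refine mul_le_mul_of_nonneg_left ?_ (norm_nonneg _)
          have := Summable.sum_le_tsum (range (k + 1)) (fun i _ => pow_nonneg hγ i) hsgeomγ
          rwa [tsum_geometric_of_lt_one hγ hγ1] at this
  have hs1 : Summable fun k : ℕ => lam ^ k • T^[k + 1] V := by
    refine Summable.of_norm ?_
    refine Summable.of_nonneg_of_le (fun k => norm_nonneg _) (fun k => ?_)
      ((summable_geometric_of_lt_one hlam hlam1).mul_right (‖V‖ + ‖w‖ * (1 - γ)⁻¹))
    rw [norm_smul, Real.norm_eq_abs, abs_of_nonneg (pow_nonneg hlam _)]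
    refine mul_le_mul_of_nonneg_left ?_ (pow_nonneg hlam _)
    rw [hTk k]
    calc ‖V + ∑ i ∈ range (k + 1), (B ^ i).mulVec w‖
        ≤ ‖V‖ + ‖∑ i ∈ range (k + 1), (B ^ i).mulVec w‖ := norm_add_le _ _
      _ ≤ ‖V‖ + ‖w‖ * (1 - γ)⁻¹ := add_le_add_right (hSk k) _
  have hs2 : Summable fun n : ℕ => lam ^ n • (B ^ n).mulVec w := by
    refine Summable.of_norm ?_
    refine Summable.of_nonneg_of_le (fun k => norm_nonneg _) (fun k => ?_)
      ((summable_geometric_of_lt_one hlam hlam1).mul_right ‖w‖)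
    rw [norm_smul, Real.norm_eq_abs, abs_of_nonneg (pow_nonneg hlam _)]
    refine mul_le_mul_of_nonneg_left ?_ (pow_nonneg hlam _)
    exact (hx k).trans (by
      calc ‖w‖ * γ ^ k ≤ ‖w‖ * 1 :=
            mul_le_mul_of_nonneg_left (pow_le_one₀ hγ hγ1.le) (norm_nonneg _)
        _ = ‖w‖ := mul_one _)
  have hApow : ∀ n : ℕ, (A ^ n).mulVec w = lam ^ n • (B ^ n).mulVec w := by
    intro n
    rw [hAB, smul_pow, Matrix.smul_mulVec]
  rw [h_inv, hmulvec]
  have hrhs : (∑' n : ℕ, (A ^ n).mulVec w) = ∑' n : ℕ, lam ^ n • (B ^ n).mulVec w :=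
    tsum_congr hApow
  rw [hrhs]
  funext j
  have hLj : ((1 - lam) • (∑' k : ℕ, lam ^ k • T^[k + 1] V)) j
      = (1 - lam) * ∑' k : ℕ, lam ^ k * (V j + ∑ i ∈ range (k + 1), ((B ^ i).mulVec w) j) := by
    rw [Pi.smul_apply, tsum_apply hs1, smul_eq_mul]
    congr 1
    refine tsum_congr fun k => ?_
    rw [Pi.smul_apply, smul_eq_mul, hTk k, Pi.add_apply, Finset.sum_apply]
  have hRj : (V + ∑' n : ℕ, lam ^ n • (B ^ n).mulVec w) j
      = V j + ∑' n : ℕ, lam ^ n * ((B ^ n).mulVec w) j := by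
    rw [Pi.add_apply, tsum_apply hs2]
    congr 1
  rw [hLj, hRj]
  refine real_key hlam hlam1 hγ hγ1 (V j) (fun i => ((B ^ i).mulVec w) j) ‖w‖ fun i => ?_
  calc |((B ^ i).mulVec w) j| ≤ ‖(B ^ i).mulVec w‖ := by
        rw [← Real.norm_eq_abs]
        exact norm_le_pi_norm _ j
    _ ≤ ‖w‖ * γ ^ i := hx i
end

section
/- Let n ∈ ℕ, and for 1 ≤ i ≤ n define the operator T̂_i^λ on functions V by T̂_i^λ V = V(s_i) + ∑_{j=i}^n (γλ)^{j-i} (ρ_i^j (r_j + γ V(s_{j+1})) - ρ_i^{j-1} V(s_j)), where ρ_i^j = ∏_{l=i}^j ρ_l (with ρ_i^{j} = 1 if j < i). Then for i < n: T̂_i^λ V = ρ_i r_i + γ ρ_i (1-λ) V(s_{i+1}) + γλ ρ_i T̂_{i+1}^λ V. -/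
open Finset

/-- Forward recursion for the empirical untruncated λ-Bellman operator:
    for `1 ≤ i < n`, `T̂_i^λ V = ρ_i r_i + γρ_i(1-λ)V(s_{i+1}) + γλρ_i T̂_{i+1}^λ V`. -/
theorem empirical_operator_forward_recursion {S : Type*} (n : ℕ) (γ lam : ℝ)
    (s : ℕ → S) (r ρ : ℕ → ℝ) (V : S → ℝ)
    (Tl : ℕ → ℝ)
    (hTl : ∀ i, Tl i = V (s i) + ∑ j ∈ Icc i n, (γ * lam) ^ (j - i) *
      ((∏ l ∈ Icc i j, ρ l) * (r j + γ * V (s (j + 1))) -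
        (∏ l ∈ Icc i (j - 1), ρ l) * V (s j)))
    (i : ℕ) (hi1 : 1 ≤ i) (hin : i < n) :
    Tl i = ρ i * r i + γ * ρ i * (1 - lam) * V (s (i + 1)) + γ * lam * ρ i * Tl (i + 1) := by
  have hne : i ∉ Finset.Icc (i+1) n := by simp
  have hIcc : Finset.Icc i n = insert i (Finset.Icc (i+1) n) := by
    ext x; simp only [Finset.mem_Icc, Finset.mem_insert]; omega
  rw [hTl i, hTl (i+1), hIcc, Finset.sum_insert hne]
  have hterm : ∀ j ∈ Finset.Icc (i+1) n,
      (γ * lam) ^ (j - i) * ((∏ l ∈ Finset.Icc i j, ρ l) * (r j + γ * V (s (j+1))) -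
        (∏ l ∈ Finset.Icc i (j-1), ρ l) * V (s j))
      = (γ * lam * ρ i) * ((γ * lam) ^ (j - (i+1)) *
        ((∏ l ∈ Finset.Icc (i+1) j, ρ l) * (r j + γ * V (s (j+1))) -
          (∏ l ∈ Finset.Icc (i+1) (j-1), ρ l) * V (s j))) := by
    intro j hj
    simp only [Finset.mem_Icc] at hj
    obtain ⟨hij, hjn⟩ := hj
    have h1 : j - i = (j - (i+1)) + 1 := by omega
    have h2 : Finset.Icc i j = insert i (Finset.Icc (i+1) j) := by
      ext x; simp only [Finset.mem_Icc, Finset.mem_insert]; omega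
    have h3 : Finset.Icc i (j-1) = insert i (Finset.Icc (i+1) (j-1)) := by
      ext x; simp only [Finset.mem_Icc, Finset.mem_insert]; omega
    rw [h1, h2, h3, Finset.prod_insert (by simp), Finset.prod_insert (by simp)]
    ring
  rw [Finset.sum_congr rfl hterm, ← Finset.mul_sum]
  have e1 : (i : ℕ) - i = 0 := by omega
  have e2 : Finset.Icc i (i-1) = ∅ := Finset.Icc_eq_empty (by omega)
  rw [e1, e2, Finset.Icc_self, Finset.prod_singleton, Finset.prod_empty]
  ring
end

section
/- Consider a Markov chain (s_i) with stationary distribution μ₀ and per-state-action importance weights ρ(s,a) = π(a|s)/π₀(a|s). Let P̃ be the N×N matrix with entries p̃_{ss'} = ∑_a π(a|s) ρ(s,a) P(s'|s,a), and let x_i ∈ ℝᴺ be the indicator vector of state s_i. Writing ρ_m^{i-1} = ∏_{l=m}^{i-1} ρ(s_l, a_l), we have for all m ≤ i, E₀[(ρ_m^{i-1})² x_i x_iᵀ] = diag((P̃ᵀ)^{i-m} μ₀), where E₀ denotes expectation under the stationary distribution of the behavior chain. -/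
open Matrix Finset

lemma key_lemma {N : ℕ} {A : Type*} [Fintype A]
    (π π₀ : Fin N → A → ℝ) (P : Fin N → A → Fin N → ℝ)
    (hπ₀pos : ∀ s a, 0 < π₀ s a)
    (ρ : Fin N → A → ℝ) (hρ : ∀ s a, ρ s a = π s a / π₀ s a)
    (Pt : Matrix (Fin N) (Fin N) ℝ)
    (hPt : ∀ s s', Pt s s' = ∑ a, π s a * ρ s a * P s a s')
    (k : ℕ) : ∀ (μ : Fin N → ℝ) (s : Fin N),
    (∑ σ : Fin (k + 1) → Fin N, ∑ α : Fin k → A,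
          μ (σ 0) *
            (∏ l : Fin k, π₀ (σ l.castSucc) (α l) * P (σ l.castSucc) (α l) (σ l.succ)) *
            (∏ l : Fin k, ρ (σ l.castSucc) (α l)) ^ 2 *
            (if σ (Fin.last k) = s then 1 else 0)) =
      (Ptᵀ ^ k).mulVec μ s := by
  induction k with
  | zero =>
    intro μ s
    rw [pow_zero, Matrix.one_mulVec]
    rw [Fintype.sum_equiv (Equiv.funUnique (Fin 1) (Fin N))
      _ (fun x : Fin N => μ x * (if x = s then 1 else 0)) (by intro σ; simp)]
    simp [Finset.sum_ite_eq']
  | succ k ih =>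
    intro μ s
    have hw : ∀ s a, π₀ s a * ρ s a ^ 2 = π s a * ρ s a := by
      intro s a
      have h0 := (hπ₀pos s a).ne'
      rw [hρ]; field_simp
    have hν : ∀ t, (Ptᵀ *ᵥ μ) t
        = ∑ s0, ∑ a0, μ s0 * (π₀ s0 a0 * P s0 a0 t) * ρ s0 a0 ^ 2 := by
      intro t
      simp only [Matrix.mulVec, dotProduct, Matrix.transpose_apply, hPt, Finset.sum_mul]
      refine Finset.sum_congr rfl fun s0 _ => Finset.sum_congr rfl fun a0 _ => ?_
      linear_combination (-(P s0 a0 t * μ s0)) * (hw s0 a0)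
    rw [pow_succ, ← Matrix.mulVec_mulVec, ← ih (Ptᵀ.mulVec μ) s]
    -- LHS over paths of length k+1 ; RHS sum over τ β with ν
    rw [← Equiv.sum_comp (Fin.consEquiv fun _ : Fin (k+1+1) => Fin N), Fintype.sum_prod_type]
    simp only [Fin.consEquiv_apply]
    simp only [← Equiv.sum_comp (Fin.consEquiv fun _ : Fin (k+1) => A), Fintype.sum_prod_type,
      Fin.consEquiv_apply]
    simp only [Fin.prod_univ_succ, Fin.cons_zero, ← Fin.succ_castSucc, ← Fin.succ_last,
      Fin.cons_succ, Fin.castSucc_zero]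
    simp only [hν, Finset.sum_mul]
    rw [Finset.sum_comm]
    conv_rhs => enter [2, τ]; rw [Finset.sum_comm]
    conv_rhs => enter [2, τ, 2, x]; rw [Finset.sum_comm]
    refine Finset.sum_congr rfl fun τ _ => Finset.sum_congr rfl fun x _ =>
      Finset.sum_congr rfl fun a _ => Finset.sum_congr rfl fun β _ => ?_
    ring

/-- Second-moment identity for importance-sampling products on a stationary Markov chain:
    `E₀[(ρ_m^{i-1})² x_i x_iᵀ] = diag((P̃ᵀ)^{i-m} μ₀)`, with the expectation written as an
    explicit sum over paths of length `k = i - m` started from the stationary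
    distribution `μ₀` and following the behavior policy `π₀`. -/
theorem importance_sampling_second_moment {N : ℕ} {A : Type*} [Fintype A]
    (π π₀ : Fin N → A → ℝ) (P : Fin N → A → Fin N → ℝ) (μ₀ : Fin N → ℝ)
    (hπ₀pos : ∀ s a, 0 < π₀ s a)
    (hstat : ∀ s', ∑ s, μ₀ s * ∑ a, π₀ s a * P s a s' = μ₀ s')
    (ρ : Fin N → A → ℝ) (hρ : ∀ s a, ρ s a = π s a / π₀ s a)
    (Pt : Matrix (Fin N) (Fin N) ℝ)
    (hPt : ∀ s s', Pt s s' = ∑ a, π s a * ρ s a * P s a s')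
    (k : ℕ) :
    (Matrix.of fun s s' : Fin N =>
        ∑ σ : Fin (k + 1) → Fin N, ∑ α : Fin k → A,
          μ₀ (σ 0) *
            (∏ l : Fin k, π₀ (σ l.castSucc) (α l) * P (σ l.castSucc) (α l) (σ l.succ)) *
            (∏ l : Fin k, ρ (σ l.castSucc) (α l)) ^ 2 *
            (if σ (Fin.last k) = s then 1 else 0) *
            (if σ (Fin.last k) = s' then 1 else 0)) =
      Matrix.diagonal ((Ptᵀ ^ k).mulVec μ₀) := by
  ext s s'
  simp only [Matrix.of_apply]
  by_cases h : s = s'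
  · subst h
    rw [Matrix.diagonal_apply_eq]
    rw [← key_lemma π π₀ P hπ₀pos ρ hρ Pt hPt k μ₀ s]
    refine Finset.sum_congr rfl fun σ _ => Finset.sum_congr rfl fun α _ => ?_
    by_cases hσ : σ (Fin.last k) = s <;> simp [hσ]
  · rw [Matrix.diagonal_apply_ne _ h]
    refine Finset.sum_eq_zero fun σ _ => Finset.sum_eq_zero fun α _ => ?_
    by_cases hσ : σ (Fin.last k) = s
    · simp [hσ, h]
    · simp [hσ]
end

section
/- In the same setting, for all m ≤ i ≤ j: E₀[ρ_m^{i-1} ρ_m^{j-1} x_i x_jᵀ] = diag((P̃ᵀ)^{i-m} μ₀) · P^{j-i}, where P is the transition matrix of the target policy π (P(s,s') = ∑_a π(a|s)P(s'|s,a)). -/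
open Matrix Finset

lemma front_lemma {N : ℕ} (M : Matrix (Fin N) (Fin N) ℝ) :
    ∀ (k : ℕ) (v : Fin N → ℝ) (s : Fin N),
    ∑ σ : Fin (k+1) → Fin N, v (σ 0) * (∏ l : Fin k, M (σ l.castSucc) (σ l.succ)) *
      (if σ (Fin.last k) = s then 1 else 0) = Matrix.vecMul v (M ^ k) s := by
  intro k
  induction k with
  | zero =>
    intro v s
    rw [← Equiv.sum_comp (Equiv.funUnique (Fin 1) (Fin N)).symm]
    simp [mul_ite, Finset.sum_ite_eq']
  | succ k ih =>
    intro v s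
    rw [← Equiv.sum_comp (Fin.consEquiv (fun _ : Fin (k+1+1) => Fin N))]
    rw [Fintype.sum_prod_type]
    have key : ∀ (x : Fin N) (τ : Fin (k+1) → Fin N),
        ((Fin.consEquiv (fun _ : Fin (k+1+1) => Fin N)) (x, τ)) 0 = x ∧
        (∏ l : Fin (k+1), M (((Fin.consEquiv (fun _ : Fin (k+1+1) => Fin N)) (x, τ)) l.castSucc)
            (((Fin.consEquiv (fun _ : Fin (k+1+1) => Fin N)) (x, τ)) l.succ))
          = M x (τ 0) * ∏ l : Fin k, M (τ l.castSucc) (τ l.succ) ∧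
        ((Fin.consEquiv (fun _ : Fin (k+1+1) => Fin N)) (x, τ)) (Fin.last (k+1)) = τ (Fin.last k) := by
      intro x τ
      refine ⟨by simp, ?_, by simp [← Fin.succ_last]⟩
      rw [Fin.prod_univ_succ]
      simp [← Fin.succ_castSucc]
    calc ∑ x, ∑ τ : Fin (k+1) → Fin N,
          v (((Fin.consEquiv (fun _ : Fin (k+1+1) => Fin N)) (x, τ)) 0) *
          (∏ l : Fin (k+1), M (((Fin.consEquiv (fun _ : Fin (k+1+1) => Fin N)) (x, τ)) l.castSucc)
            (((Fin.consEquiv (fun _ : Fin (k+1+1) => Fin N)) (x, τ)) l.succ)) *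
          (if ((Fin.consEquiv (fun _ : Fin (k+1+1) => Fin N)) (x, τ)) (Fin.last (k+1)) = s then 1 else 0)
        = ∑ τ : Fin (k+1) → Fin N, (∑ x, v x * M x (τ 0)) *
            (∏ l : Fin k, M (τ l.castSucc) (τ l.succ)) *
            (if τ (Fin.last k) = s then 1 else 0) := by
          rw [Finset.sum_comm]
          refine Finset.sum_congr rfl fun τ _ => ?_
          rw [Finset.sum_mul, Finset.sum_mul]
          refine Finset.sum_congr rfl fun x _ => ?_
          rw [(key x τ).1, (key x τ).2.1, (key x τ).2.2]; ring
      _ = Matrix.vecMul v (M ^ (k+1)) s := by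
          have := ih (Matrix.vecMul v M) s
          rw [Matrix.vecMul_vecMul, ← pow_succ'] at this
          rw [← this]
          exact Finset.sum_congr rfl fun τ _ => by rw [Matrix.vecMul]; rfl

def snocF {N n : ℕ} (τ : Fin n → Fin N) (x : Fin N) : Fin (n+1) → Fin N := Fin.snoc τ x

lemma ind_mul {β : Type*} [DecidableEq β] (a s s' : β) :
    (if a = s then (1:ℝ) else 0) * (if a = s' then 1 else 0)
    = (if a = s then 1 else 0) * (if s = s' then 1 else 0) := by
  rcases eq_or_ne a s with rfl | h
  · simp
  · simp [h]

lemma mid_lemma {N : ℕ} (Pt Pπ : Matrix (Fin N) (Fin N) ℝ) (μ₀ : Fin N → ℝ) (k₁ : ℕ) :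
    ∀ (k₂ : ℕ) (s s' : Fin N),
    ∑ σ : Fin (k₁+k₂+1) → Fin N,
      μ₀ (σ 0) * (∏ l : Fin (k₁+k₂),
        (if (l : ℕ) < k₁ then Pt (σ l.castSucc) (σ l.succ) else Pπ (σ l.castSucc) (σ l.succ))) *
      (if σ ⟨k₁, (by omega : k₁ + 0 < k₁ + k₂ + 1)⟩ = s then 1 else 0) * (if σ (Fin.last (k₁+k₂)) = s' then 1 else 0)
    = (Matrix.diagonal (Matrix.vecMul μ₀ (Pt ^ k₁)) * Pπ ^ k₂) s s' := by
  intro k₂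
  induction k₂ with
  | zero =>
    intro s s'
    have hmid : (⟨k₁, by omega⟩ : Fin (k₁+0+1)) = Fin.last (k₁+0) := rfl
    rw [hmid]
    calc ∑ σ : Fin (k₁+0+1) → Fin N,
          μ₀ (σ 0) * (∏ l : Fin (k₁+0),
            (if (l : ℕ) < k₁ then Pt (σ l.castSucc) (σ l.succ) else Pπ (σ l.castSucc) (σ l.succ))) *
          (if σ (Fin.last (k₁+0)) = s then 1 else 0) * (if σ (Fin.last (k₁+0)) = s' then 1 else 0)
        = (∑ σ : Fin (k₁+0+1) → Fin N,
            μ₀ (σ 0) * (∏ l : Fin (k₁+0), Pt (σ l.castSucc) (σ l.succ)) *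
            (if σ (Fin.last (k₁+0)) = s then 1 else 0)) * (if s = s' then 1 else 0) := by
          rw [Finset.sum_mul]
          refine Finset.sum_congr rfl fun σ _ => ?_
          have hp : (∏ l : Fin (k₁+0),
              (if (l : ℕ) < k₁ then Pt (σ l.castSucc) (σ l.succ) else Pπ (σ l.castSucc) (σ l.succ)))
              = ∏ l : Fin (k₁+0), Pt (σ l.castSucc) (σ l.succ) :=
            Finset.prod_congr rfl fun l _ => if_pos (by have := l.isLt; omega)
          rw [hp, mul_assoc, ind_mul, ← mul_assoc]
      _ = (Matrix.diagonal (Matrix.vecMul μ₀ (Pt ^ k₁)) * Pπ ^ 0) s s' := by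
          rw [front_lemma Pt (k₁+0) μ₀ s, pow_zero, Matrix.mul_one, Matrix.diagonal_apply]
          by_cases h : s = s' <;> simp [h]
  | succ k₂ ih =>
    intro s s'
    show (∑ σ : Fin (k₁+k₂+1+1) → Fin N,
        μ₀ (σ 0) * (∏ l : Fin (k₁+k₂+1),
          (if (l : ℕ) < k₁ then Pt (σ l.castSucc) (σ l.succ) else Pπ (σ l.castSucc) (σ l.succ))) *
        (if σ ⟨k₁, by omega⟩ = s then 1 else 0) * (if σ (Fin.last (k₁+k₂+1)) = s' then 1 else 0))
      = (Matrix.diagonal (Matrix.vecMul μ₀ (Pt ^ k₁)) * Pπ ^ (k₂+1)) s s'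
    rw [← Equiv.sum_comp (Fin.snocEquiv (fun _ : Fin (k₁+k₂+1+1) => Fin N))]
    have he : ∀ (p : Fin N × (Fin (k₁+k₂+1) → Fin N)),
        (Fin.snocEquiv (fun _ : Fin (k₁+k₂+1+1) => Fin N)) p = snocF p.2 p.1 := fun _ => rfl
    simp only [he]
    rw [Fintype.sum_prod_type]
    have key : ∀ (x : Fin N) (τ : Fin (k₁+k₂+1) → Fin N),
        μ₀ (snocF τ x 0) *
        (∏ l : Fin (k₁+k₂+1),
          (if (l:ℕ) < k₁ then Pt (snocF τ x l.castSucc) (snocF τ x l.succ)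
            else Pπ (snocF τ x l.castSucc) (snocF τ x l.succ))) *
        (if snocF τ x ⟨k₁, by omega⟩ = s then 1 else 0) *
        (if snocF τ x (Fin.last (k₁+k₂+1)) = s' then 1 else 0)
      = (μ₀ (τ 0) *
          (∏ l : Fin (k₁+k₂),
            (if (l:ℕ) < k₁ then Pt (τ l.castSucc) (τ l.succ) else Pπ (τ l.castSucc) (τ l.succ))) *
          (if τ ⟨k₁, by omega⟩ = s then 1 else 0)) *
        (Pπ (τ (Fin.last (k₁+k₂))) x * (if x = s' then 1 else 0)) := by
      intro x τ
      unfold snocF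
      rw [Fin.prod_univ_castSucc]
      simp only [Fin.succ_castSucc, Fin.succ_last, Fin.snoc_castSucc, Fin.snoc_last,
        Fin.coe_castSucc, Fin.val_last]
      rw [show ((0 : Fin (k₁+k₂+1+1))) = Fin.castSucc 0 from (Fin.castSucc_zero).symm,
        Fin.snoc_castSucc]
      rw [show (⟨k₁, by omega⟩ : Fin (k₁+k₂+1+1)) = Fin.castSucc ⟨k₁, by omega⟩ from rfl,
        Fin.snoc_castSucc]
      rw [if_neg (show ¬ (k₁+k₂ < k₁) by omega)]
      ring
    calc ∑ x, ∑ τ : Fin (k₁+k₂+1) → Fin N,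
          μ₀ (snocF τ x 0) *
          (∏ l : Fin (k₁+k₂+1),
            (if (l:ℕ) < k₁ then Pt (snocF τ x l.castSucc) (snocF τ x l.succ)
              else Pπ (snocF τ x l.castSucc) (snocF τ x l.succ))) *
          (if snocF τ x ⟨k₁, by omega⟩ = s then 1 else 0) *
          (if snocF τ x (Fin.last (k₁+k₂+1)) = s' then 1 else 0)
        = ∑ τ : Fin (k₁+k₂+1) → Fin N, ∑ x,
            (μ₀ (τ 0) *
              (∏ l : Fin (k₁+k₂),
                (if (l:ℕ) < k₁ then Pt (τ l.castSucc) (τ l.succ) else Pπ (τ l.castSucc) (τ l.succ))) *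
              (if τ ⟨k₁, by omega⟩ = s then 1 else 0)) *
            (Pπ (τ (Fin.last (k₁+k₂))) x * (if x = s' then 1 else 0)) := by
          rw [Finset.sum_comm]
          exact Finset.sum_congr rfl fun τ _ => Finset.sum_congr rfl fun x _ => key x τ
      _ = ∑ τ : Fin (k₁+k₂+1) → Fin N, ∑ t,
            (μ₀ (τ 0) *
              (∏ l : Fin (k₁+k₂),
                (if (l:ℕ) < k₁ then Pt (τ l.castSucc) (τ l.succ) else Pπ (τ l.castSucc) (τ l.succ))) *
              (if τ ⟨k₁, by omega⟩ = s then 1 else 0) * (if τ (Fin.last (k₁+k₂)) = t then 1 else 0)) *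
            Pπ t s' := by
          refine Finset.sum_congr rfl fun τ _ => ?_
          rw [← Finset.mul_sum]
          have h1 : ∑ x, Pπ (τ (Fin.last (k₁+k₂))) x * (if x = s' then 1 else 0)
              = Pπ (τ (Fin.last (k₁+k₂))) s' := by
            simp [mul_ite, Finset.sum_ite_eq']
          rw [h1]
          have h2 : ∑ t, (if τ (Fin.last (k₁+k₂)) = t then (1:ℝ) else 0) * Pπ t s'
              = Pπ (τ (Fin.last (k₁+k₂))) s' := by
            simp [ite_mul, Finset.sum_ite_eq]
          rw [← h2, Finset.mul_sum]
          exact Finset.sum_congr rfl fun t _ => by ring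
      _ = (Matrix.diagonal (Matrix.vecMul μ₀ (Pt ^ k₁)) * Pπ ^ (k₂+1)) s s' := by
          rw [Finset.sum_comm]
          have : ∀ t, (∑ τ : Fin (k₁+k₂+1) → Fin N,
              μ₀ (τ 0) *
              (∏ l : Fin (k₁+k₂),
                (if (l:ℕ) < k₁ then Pt (τ l.castSucc) (τ l.succ) else Pπ (τ l.castSucc) (τ l.succ))) *
              (if τ ⟨k₁, by omega⟩ = s then 1 else 0) * (if τ (Fin.last (k₁+k₂)) = t then 1 else 0))
              = (Matrix.diagonal (Matrix.vecMul μ₀ (Pt ^ k₁)) * Pπ ^ k₂) s t := ih s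
          calc ∑ t, ∑ τ : Fin (k₁+k₂+1) → Fin N,
                (μ₀ (τ 0) *
                  (∏ l : Fin (k₁+k₂),
                    (if (l:ℕ) < k₁ then Pt (τ l.castSucc) (τ l.succ) else Pπ (τ l.castSucc) (τ l.succ))) *
                  (if τ ⟨k₁, by omega⟩ = s then 1 else 0) * (if τ (Fin.last (k₁+k₂)) = t then 1 else 0)) *
                Pπ t s'
              = ∑ t, (Matrix.diagonal (Matrix.vecMul μ₀ (Pt ^ k₁)) * Pπ ^ k₂) s t * Pπ t s' := by
                refine Finset.sum_congr rfl fun t _ => ?_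
                rw [← Finset.sum_mul, this t]
            _ = (Matrix.diagonal (Matrix.vecMul μ₀ (Pt ^ k₁)) * Pπ ^ (k₂+1)) s s' := by
                rw [pow_succ, ← Matrix.mul_assoc, Matrix.mul_apply]

/-- Cross-moment identity for importance-sampling weighted indicator outer products on a
    stationary chain: for `m ≤ i ≤ j`, writing `k₁ = i - m` and `k₂ = j - i`,
    `E₀[ρ_m^{i-1} ρ_m^{j-1} x_i x_jᵀ] = diag((P̃ᵀ)^{k₁} μ₀) · Pπ^{k₂}`,
    with the expectation written as an explicit path sum over paths of length `k₁ + k₂`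
    started from the stationary distribution `μ₀` and following the behavior policy. -/
theorem importance_sampling_cross_moment {N : ℕ} {A : Type*} [Fintype A]
    (π π₀ : Fin N → A → ℝ) (P : Fin N → A → Fin N → ℝ) (μ₀ : Fin N → ℝ)
    (hπ₀pos : ∀ s a, 0 < π₀ s a)
    (hstat : ∀ s', ∑ s, μ₀ s * ∑ a, π₀ s a * P s a s' = μ₀ s')
    (ρ : Fin N → A → ℝ) (hρ : ∀ s a, ρ s a = π s a / π₀ s a)
    (Pt : Matrix (Fin N) (Fin N) ℝ)
    (hPt : ∀ s s', Pt s s' = ∑ a, π s a * ρ s a * P s a s')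
    (Pπ : Matrix (Fin N) (Fin N) ℝ)
    (hPπ : ∀ s s', Pπ s s' = ∑ a, π s a * P s a s')
    (k₁ k₂ : ℕ) :
    (Matrix.of fun s s' : Fin N =>
        ∑ σ : Fin (k₁ + k₂ + 1) → Fin N, ∑ α : Fin (k₁ + k₂) → A,
          μ₀ (σ 0) *
            (∏ l : Fin (k₁ + k₂),
              π₀ (σ l.castSucc) (α l) * P (σ l.castSucc) (α l) (σ l.succ)) *
            (∏ l : Fin (k₁ + k₂),
              ρ (σ l.castSucc) (α l) * (if (l : ℕ) < k₁ then ρ (σ l.castSucc) (α l) else 1)) *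
            (if σ ⟨k₁, by omega⟩ = s then 1 else 0) *
            (if σ (Fin.last (k₁ + k₂)) = s' then 1 else 0)) =
      Matrix.diagonal ((Ptᵀ ^ k₁).mulVec μ₀) * Pπ ^ k₂ := by
  have hπρ : ∀ s a, π₀ s a * ρ s a = π s a := by
    intro s a
    rw [hρ]
    exact mul_div_cancel₀ _ (hπ₀pos s a).ne'
  ext s s'
  rw [Matrix.of_apply, show (Ptᵀ ^ k₁) = (Pt ^ k₁)ᵀ from (Matrix.transpose_pow Pt k₁).symm ▸ rfl]
  rw [Matrix.mulVec_transpose]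
  rw [← mid_lemma Pt Pπ μ₀ k₁ k₂ s s']
  refine Finset.sum_congr rfl fun σ _ => ?_
  calc ∑ α : Fin (k₁ + k₂) → A,
        μ₀ (σ 0) *
          (∏ l : Fin (k₁ + k₂),
            π₀ (σ l.castSucc) (α l) * P (σ l.castSucc) (α l) (σ l.succ)) *
          (∏ l : Fin (k₁ + k₂),
            ρ (σ l.castSucc) (α l) * (if (l : ℕ) < k₁ then ρ (σ l.castSucc) (α l) else 1)) *
          (if σ ⟨k₁, by omega⟩ = s then 1 else 0) *
          (if σ (Fin.last (k₁ + k₂)) = s' then 1 else 0)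
      = (∑ α : Fin (k₁ + k₂) → A, ∏ l : Fin (k₁ + k₂),
            ((π₀ (σ l.castSucc) (α l) * P (σ l.castSucc) (α l) (σ l.succ)) *
              (ρ (σ l.castSucc) (α l) * (if (l : ℕ) < k₁ then ρ (σ l.castSucc) (α l) else 1)))) *
          (μ₀ (σ 0) * (if σ ⟨k₁, by omega⟩ = s then 1 else 0) *
            (if σ (Fin.last (k₁ + k₂)) = s' then 1 else 0)) := by
        rw [Finset.sum_mul]
        refine Finset.sum_congr rfl fun α _ => ?_
        conv_rhs => rw [Finset.prod_mul_distrib]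
        ring
    _ = (∏ l : Fin (k₁ + k₂),
            (if (l : ℕ) < k₁ then Pt (σ l.castSucc) (σ l.succ) else Pπ (σ l.castSucc) (σ l.succ))) *
          (μ₀ (σ 0) * (if σ ⟨k₁, by omega⟩ = s then 1 else 0) *
            (if σ (Fin.last (k₁ + k₂)) = s' then 1 else 0)) := by
        congr 1
        have hfac : ∀ l : Fin (k₁ + k₂),
            (if (l : ℕ) < k₁ then Pt (σ l.castSucc) (σ l.succ) else Pπ (σ l.castSucc) (σ l.succ))
            = ∑ a, (π₀ (σ l.castSucc) a * P (σ l.castSucc) a (σ l.succ)) *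
                (ρ (σ l.castSucc) a * (if (l : ℕ) < k₁ then ρ (σ l.castSucc) a else 1)) := by
          intro l
          by_cases h : (l : ℕ) < k₁
          · rw [if_pos h, hPt]
            refine Finset.sum_congr rfl fun a _ => ?_
            rw [if_pos h]
            linear_combination (-(P (σ l.castSucc) a (σ l.succ) * ρ (σ l.castSucc) a)) *
              hπρ (σ l.castSucc) a
          · rw [if_neg h, hPπ]
            refine Finset.sum_congr rfl fun a _ => ?_
            rw [if_neg h]
            linear_combination (-(P (σ l.castSucc) a (σ l.succ))) * hπρ (σ l.castSucc) a
        refine Eq.symm ?_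
        rw [Finset.prod_congr rfl (fun l _ => hfac l), Finset.prod_univ_sum,
          Fintype.piFinset_univ]
    _ = μ₀ (σ 0) *
          (∏ l : Fin (k₁ + k₂),
            (if (l : ℕ) < k₁ then Pt (σ l.castSucc) (σ l.succ) else Pπ (σ l.castSucc) (σ l.succ))) *
          (if σ ⟨k₁, by omega⟩ = s then 1 else 0) *
          (if σ (Fin.last (k₁ + k₂)) = s' then 1 else 0) := by ring
end
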